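/- For each fixed t > 0, the function F^μ(t, z) = Φ((z − μt)/√t) − e^{2μz} Φ((−z − μt)/√t), defined for z ≥ 0, satisfies F^μ(t, 0) = 0, is nondecreasing in z, and tends to 1 as z → ∞. -/

import Mathlib

open Set Filter

/-- Standard normal CDF. -/
noncomputable def stdNormalCDF (x : ℝ) : ℝ :=
  ∫ t in Iic x, (Real.sqrt (2 * Real.pi))⁻¹ * Real.exp (-(t ^ 2) / 2)

/-- The CDF of the maximum of Brownian motion with drift μ over [0, t]. -/
noncomputable def Fmu (μ t z : ℝ) : ℝ :=
  stdNormalCDF ((z - μ * t) / Real.sqrt t)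
    - Real.exp (2 * μ * z) * stdNormalCDF ((-z - μ * t) / Real.sqrt t)

section Aux

open MeasureTheory Real

noncomputable def gaussPDF (x : ℝ) : ℝ :=
  (Real.sqrt (2 * Real.pi))⁻¹ * Real.exp (-(x ^ 2) / 2)

lemma gaussPDF_pos (x : ℝ) : 0 < gaussPDF x := by
  have : (0:ℝ) < Real.sqrt (2 * Real.pi) := Real.sqrt_pos.2 (by positivity)
  exact mul_pos (inv_pos.2 this) (Real.exp_pos _)

lemma gauss_eq (x : ℝ) : Real.exp (-(x ^ 2) / 2) = Real.exp (-(1/2 : ℝ) * x ^ 2) := by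
  ring_nf

lemma integrable_gaussPDF : Integrable gaussPDF := by
  have h := (integrable_exp_neg_mul_sq (by norm_num : (0:ℝ) < 1/2)).const_mul
    (Real.sqrt (2 * Real.pi))⁻¹
  refine h.congr (Eventually.of_forall fun x => ?_)
  simp only [gaussPDF, gauss_eq]

lemma integral_gaussPDF : ∫ x, gaussPDF x = 1 := by
  have h : ∫ x : ℝ, Real.exp (-(1/2 : ℝ) * x ^ 2) = Real.sqrt (Real.pi / (1/2)) :=
    integral_gaussian (1/2)
  have h2 : (Real.pi / (1/2 : ℝ)) = 2 * Real.pi := by ring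
  simp only [gaussPDF, gauss_eq]
  rw [integral_const_mul, h, h2, inv_mul_cancel₀]
  exact ne_of_gt (Real.sqrt_pos.2 (by positivity))


lemma continuous_gaussPDF : Continuous gaussPDF := by
  unfold gaussPDF; fun_prop

lemma stdNormalCDF_eq' (x : ℝ) :
    stdNormalCDF x = stdNormalCDF 0 + ∫ u in (0:ℝ)..x, gaussPDF u := by
  have h := intervalIntegral.integral_Iic_sub_Iic
    (integrable_gaussPDF.integrableOn (s := Iic (0:ℝ)))
    (integrable_gaussPDF.integrableOn (s := Iic x)) (μ := volume) (a := (0:ℝ)) (b := x)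
  have : stdNormalCDF x - stdNormalCDF 0 = ∫ u in (0:ℝ)..x, gaussPDF u := h
  linarith

lemma hasDerivAt_stdNormalCDF (x : ℝ) : HasDerivAt stdNormalCDF (gaussPDF x) x := by
  have h : HasDerivAt (fun y => stdNormalCDF 0 + ∫ u in (0:ℝ)..y, gaussPDF u)
      (gaussPDF x) x := by
    refine HasDerivAt.const_add _ ?_
    exact intervalIntegral.integral_hasDerivAt_right
      integrable_gaussPDF.intervalIntegrable
      (continuous_gaussPDF.stronglyMeasurableAtFilter _ _)
      continuous_gaussPDF.continuousAt
  have heq : stdNormalCDF = fun y => stdNormalCDF 0 + ∫ u in (0:ℝ)..y, gaussPDF u :=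
    funext stdNormalCDF_eq'
  rw [heq]
  exact h

lemma stdNormalCDF_nonneg (x : ℝ) : 0 ≤ stdNormalCDF x :=
  setIntegral_nonneg measurableSet_Iic fun y _ => (gaussPDF_pos y).le

lemma tendsto_stdNormalCDF_atTop : Tendsto stdNormalCDF atTop (nhds 1) := by
  have h := (MeasureTheory.aecover_Iic (μ := volume) (l := atTop)
      tendsto_id).integral_tendsto_of_countably_generated integrable_gaussPDF
  rw [integral_gaussPDF] at h
  exact h

lemma tendsto_gaussPDF_atTop : Tendsto gaussPDF atTop (nhds 0) := by
  have h1 : Tendsto (fun y : ℝ => -(y ^ 2) / 2) atTop atBot := by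
    apply Tendsto.atBot_div_const (by norm_num : (0:ℝ) < 2)
    exact tendsto_neg_atTop_atBot.comp (tendsto_pow_atTop (by norm_num : 2 ≠ 0))
  have h2 : Tendsto (fun y : ℝ => Real.exp (-(y ^ 2) / 2)) atTop (nhds 0) :=
    Real.tendsto_exp_atBot.comp h1
  have h3 := h2.const_mul (Real.sqrt (2 * Real.pi))⁻¹
  unfold gaussPDF
  simpa only [mul_zero] using h3

lemma tendsto_gaussPDF_atBot : Tendsto gaussPDF atBot (nhds 0) := by
  have := tendsto_gaussPDF_atTop.comp tendsto_neg_atBot_atTop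
  refine this.congr fun y => ?_
  simp [Function.comp, gaussPDF, neg_pow]

lemma hasDerivAt_neg_gaussPDF (x : ℝ) :
    HasDerivAt (fun y => -gaussPDF y) (x * gaussPDF x) x := by
  have h1 : HasDerivAt (fun y : ℝ => -(y ^ 2) / 2) (-x) x := by
    have h := ((hasDerivAt_pow 2 x).neg).div_const 2
    have he : -(↑(2:ℕ) * x ^ (2 - 1)) / 2 = -x := by push_cast; ring
    rwa [he] at h
  have h2 : HasDerivAt (fun y : ℝ => Real.exp (-(y ^ 2) / 2))
      (Real.exp (-(x ^ 2) / 2) * -x) x := h1.exp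
  have h3 := (h2.const_mul (Real.sqrt (2 * Real.pi))⁻¹).neg
  have he : -((Real.sqrt (2 * Real.pi))⁻¹ * (Real.exp (-(x ^ 2) / 2) * -x))
      = x * gaussPDF x := by unfold gaussPDF; ring
  rwa [he] at h3

lemma integrable_mul_gaussPDF : Integrable (fun x => x * gaussPDF x) := by
  have h := ((integrable_mul_exp_neg_mul_sq (by norm_num : (0:ℝ) < 1/2)).mul_const
    (Real.sqrt (2 * Real.pi))⁻¹)
  refine h.congr (Eventually.of_forall fun x => ?_)
  simp only [gaussPDF, gauss_eq]; ring

lemma integral_mul_gaussPDF_Iic (b : ℝ) :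
    ∫ x in Iic b, x * gaussPDF x = -gaussPDF b := by
  have := MeasureTheory.integral_Iic_of_hasDerivAt_of_tendsto' (a := b)
    (fun x _ => hasDerivAt_neg_gaussPDF x) integrable_mul_gaussPDF.integrableOn
    tendsto_gaussPDF_atBot.neg
  rw [this]; ring

lemma stdNormalCDF_le_mills {b : ℝ} (hb : b < 0) :
    stdNormalCDF b ≤ gaussPDF b / (-b) := by
  have hmono : stdNormalCDF b ≤ ∫ x in Iic b, (x / b) * gaussPDF x := by
    refine setIntegral_mono_on integrable_gaussPDF.integrableOn
      ?_ measurableSet_Iic fun x hx => ?_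
    · have : Integrable (fun x => b⁻¹ * (x * gaussPDF x)) :=
        integrable_mul_gaussPDF.const_mul b⁻¹
      refine (this.congr (Eventually.of_forall fun x => by ring)).integrableOn
    · have hxb : (1:ℝ) ≤ x / b := by
        rw [le_div_iff_of_neg hb]
        simpa using hx
      show gaussPDF x ≤ x / b * gaussPDF x
      nlinarith [gaussPDF_pos x]
  have heq : ∫ x in Iic b, (x / b) * gaussPDF x = gaussPDF b / (-b) := by
    have : ∫ x in Iic b, (x / b) * gaussPDF x = b⁻¹ * ∫ x in Iic b, x * gaussPDF x := by
      rw [← integral_const_mul]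
      exact setIntegral_congr_fun measurableSet_Iic fun x _ => by ring
    rw [this, integral_mul_gaussPDF_Iic, div_neg]
    ring
  linarith [hmono, heq.le, heq.ge]

lemma gauss_reflect {μ t : ℝ} (ht : 0 < t) (z : ℝ) :
    Real.exp (2 * μ * z) * gaussPDF ((-z - μ * t) / Real.sqrt t)
      = gaussPDF ((z - μ * t) / Real.sqrt t) := by
  have hst : Real.sqrt t ^ 2 = t := Real.sq_sqrt ht.le
  have hst' : Real.sqrt t ≠ 0 := ne_of_gt (Real.sqrt_pos.2 ht)
  unfold gaussPDF
  rw [mul_comm (Real.exp (2 * μ * z)), mul_assoc, ← Real.exp_add]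
  congr 1
  rw [div_pow, div_pow, hst]
  field_simp
  ring

lemma hasDerivAt_Fmu (μ t : ℝ) (ht : 0 < t) (z : ℝ) :
    HasDerivAt (Fmu μ t)
      (2 * gaussPDF ((z - μ * t) / Real.sqrt t) / Real.sqrt t
        - 2 * μ * Real.exp (2 * μ * z) * stdNormalCDF ((-z - μ * t) / Real.sqrt t)) z := by
  have hs : (0:ℝ) < Real.sqrt t := Real.sqrt_pos.2 ht
  have hA : HasDerivAt (fun z : ℝ => (z - μ * t) / Real.sqrt t) (1 / Real.sqrt t) z :=
    ((hasDerivAt_id z).sub_const (μ * t)).div_const _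
  have hB : HasDerivAt (fun z : ℝ => (-z - μ * t) / Real.sqrt t) (-1 / Real.sqrt t) z :=
    (((hasDerivAt_id z).neg).sub_const (μ * t)).div_const _
  have h1 : HasDerivAt (fun z : ℝ => stdNormalCDF ((z - μ * t) / Real.sqrt t))
      (gaussPDF ((z - μ * t) / Real.sqrt t) * (1 / Real.sqrt t)) z :=
    (hasDerivAt_stdNormalCDF _).comp z hA
  have h3 : HasDerivAt (fun z : ℝ => stdNormalCDF ((-z - μ * t) / Real.sqrt t))
      (gaussPDF ((-z - μ * t) / Real.sqrt t) * (-1 / Real.sqrt t)) z :=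
    (hasDerivAt_stdNormalCDF _).comp z hB
  have h2 : HasDerivAt (fun z : ℝ => Real.exp (2 * μ * z))
      (Real.exp (2 * μ * z) * (2 * μ * 1)) z :=
    ((hasDerivAt_id z).const_mul (2 * μ)).exp
  have h := h1.sub (h2.mul h3)
  have key := gauss_reflect (μ := μ) ht z
  have heq : gaussPDF ((z - μ * t) / Real.sqrt t) * (1 / Real.sqrt t)
        - (Real.exp (2 * μ * z) * (2 * μ * 1) * stdNormalCDF ((-z - μ * t) / Real.sqrt t)
          + Real.exp (2 * μ * z) * (gaussPDF ((-z - μ * t) / Real.sqrt t) * (-1 / Real.sqrt t)))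
      = 2 * gaussPDF ((z - μ * t) / Real.sqrt t) / Real.sqrt t
        - 2 * μ * Real.exp (2 * μ * z) * stdNormalCDF ((-z - μ * t) / Real.sqrt t) := by
    field_simp
    linear_combination (norm := ring_nf) key
  rw [heq] at h
  exact h

lemma deriv_Fmu_nonneg (μ t : ℝ) (ht : 0 < t) {z : ℝ} (hz : 0 ≤ z) :
    0 ≤ 2 * gaussPDF ((z - μ * t) / Real.sqrt t) / Real.sqrt t
        - 2 * μ * Real.exp (2 * μ * z) * stdNormalCDF ((-z - μ * t) / Real.sqrt t) := by
  have hs : (0:ℝ) < Real.sqrt t := Real.sqrt_pos.2 ht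
  have hs2 : Real.sqrt t ^ 2 = t := Real.sq_sqrt ht.le
  have hgA := gaussPDF_pos ((z - μ * t) / Real.sqrt t)
  have hΦ := stdNormalCDF_nonneg ((-z - μ * t) / Real.sqrt t)
  have he := Real.exp_pos (2 * μ * z)
  rcases le_or_gt μ 0 with hμ | hμ
  · have h1 : 0 ≤ -(2 * μ) * (Real.exp (2 * μ * z) * stdNormalCDF ((-z - μ * t) / Real.sqrt t)) :=
      mul_nonneg (by linarith) (mul_nonneg he.le hΦ)
    have h2 : 0 ≤ 2 * gaussPDF ((z - μ * t) / Real.sqrt t) / Real.sqrt t := by positivity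
    nlinarith [h1, h2]
  · have hbneg : (-z - μ * t) / Real.sqrt t < 0 :=
      div_neg_of_neg_of_pos (by nlinarith) hs
    have hmills := stdNormalCDF_le_mills hbneg
    have key := gauss_reflect (μ := μ) ht z
    have hnb : -((-z - μ * t) / Real.sqrt t) = (z + μ * t) / Real.sqrt t := by ring
    rw [hnb] at hmills
    have hzt : (0:ℝ) < z + μ * t := by nlinarith
    -- 2μ e Φ ≤ 2μ e gB √t/(z+μt) = 2μ gA √t/(z+μt) ≤ 2 gA/√t
    have step1 : 2 * μ * Real.exp (2 * μ * z) * stdNormalCDF ((-z - μ * t) / Real.sqrt t)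
        ≤ 2 * μ * gaussPDF ((z - μ * t) / Real.sqrt t) * Real.sqrt t / (z + μ * t) := by
      have h1 : gaussPDF ((-z - μ * t) / Real.sqrt t) / ((z + μ * t) / Real.sqrt t)
          = gaussPDF ((-z - μ * t) / Real.sqrt t) * Real.sqrt t / (z + μ * t) := by
        field_simp
      rw [h1] at hmills
      have h2 := mul_le_mul_of_nonneg_left hmills
        (by positivity : (0:ℝ) ≤ 2 * μ * Real.exp (2 * μ * z))
      calc 2 * μ * Real.exp (2 * μ * z) * stdNormalCDF ((-z - μ * t) / Real.sqrt t)
          ≤ 2 * μ * Real.exp (2 * μ * z)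
            * (gaussPDF ((-z - μ * t) / Real.sqrt t) * Real.sqrt t / (z + μ * t)) := h2
        _ = 2 * μ * gaussPDF ((z - μ * t) / Real.sqrt t) * Real.sqrt t / (z + μ * t) := by
            rw [← key]; ring
    have step2 : 2 * μ * gaussPDF ((z - μ * t) / Real.sqrt t) * Real.sqrt t / (z + μ * t)
        ≤ 2 * gaussPDF ((z - μ * t) / Real.sqrt t) / Real.sqrt t := by
      rw [div_le_div_iff₀ hzt hs]
      have hss : Real.sqrt t * Real.sqrt t = t := Real.mul_self_sqrt ht.le
      have h3 : 2 * μ * gaussPDF ((z - μ * t) / Real.sqrt t) * Real.sqrt t * Real.sqrt t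
          = 2 * μ * gaussPDF ((z - μ * t) / Real.sqrt t) * t := by
        rw [mul_assoc (2 * μ * gaussPDF ((z - μ * t) / Real.sqrt t)), hss]
      rw [h3]
      nlinarith [mul_nonneg hgA.le hz]
    linarith

end Aux

open MeasureTheory Real in
/-- for fixed `t > 0`, `F^μ(t, ·)` vanishes at `0`, is nondecreasing
on `[0, ∞)` and tends to `1` at `∞`. -/
theorem Fmu_is_cdf_on_nonneg (μ t : ℝ) (ht : 0 < t) :
    Fmu μ t 0 = 0 ∧
    (∀ z₁ z₂, 0 ≤ z₁ → z₁ ≤ z₂ → Fmu μ t z₁ ≤ Fmu μ t z₂) ∧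
    Tendsto (fun z => Fmu μ t z) atTop (nhds 1) := by
  have hs : (0:ℝ) < Real.sqrt t := Real.sqrt_pos.2 ht
  refine ⟨?_, ?_, ?_⟩
  · simp [Fmu]
  · have hmono : MonotoneOn (Fmu μ t) (Ici 0) := by
      apply monotoneOn_of_deriv_nonneg (convex_Ici 0)
      · exact fun x _ => ((hasDerivAt_Fmu μ t ht x).continuousAt).continuousWithinAt
      · exact fun x _ => ((hasDerivAt_Fmu μ t ht x).differentiableAt).differentiableWithinAt
      · intro x hx
        rw [interior_Ici] at hx
        rw [(hasDerivAt_Fmu μ t ht x).deriv]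
        exact deriv_Fmu_nonneg μ t ht hx.le
    exact fun z₁ z₂ h1 h12 => hmono h1 (le_trans h1 h12) h12
  · have ha : Tendsto (fun z : ℝ => (z - μ * t) / Real.sqrt t) atTop atTop := by
      apply Tendsto.atTop_div_const hs
      exact (tendsto_atTop_add_const_right _ (-(μ * t)) tendsto_id).congr fun z => by simp only [id_eq]; ring
    have h1 : Tendsto (fun z : ℝ => stdNormalCDF ((z - μ * t) / Real.sqrt t)) atTop (nhds 1) :=
      tendsto_stdNormalCDF_atTop.comp ha
    have h2 : Tendsto (fun z : ℝ => Real.exp (2 * μ * z)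
        * stdNormalCDF ((-z - μ * t) / Real.sqrt t)) atTop (nhds 0) := by
      have hup : Tendsto (fun z : ℝ => gaussPDF ((z - μ * t) / Real.sqrt t)) atTop (nhds 0) :=
        tendsto_gaussPDF_atTop.comp ha
      refine tendsto_of_tendsto_of_tendsto_of_le_of_le' tendsto_const_nhds hup ?_ ?_
      · exact Eventually.of_forall fun z =>
          mul_nonneg (Real.exp_pos _).le (stdNormalCDF_nonneg _)
      · filter_upwards [eventually_ge_atTop (Real.sqrt t - μ * t),
          eventually_gt_atTop (-(μ * t))] with z hz1 hz2
        have hbneg : (-z - μ * t) / Real.sqrt t < 0 :=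
          div_neg_of_neg_of_pos (by linarith) hs
        have hmills := stdNormalCDF_le_mills hbneg
        have hnb : -((-z - μ * t) / Real.sqrt t) = (z + μ * t) / Real.sqrt t := by ring
        rw [hnb] at hmills
        have hnb1 : (1:ℝ) ≤ (z + μ * t) / Real.sqrt t := by
          rw [le_div_iff₀ hs]; linarith
        have key := gauss_reflect (μ := μ) ht z
        have hgB := gaussPDF_pos ((-z - μ * t) / Real.sqrt t)
        calc Real.exp (2*μ*z) * stdNormalCDF ((-z - μ * t) / Real.sqrt t)
            ≤ Real.exp (2*μ*z)
              * (gaussPDF ((-z - μ * t) / Real.sqrt t) / ((z + μ*t) / Real.sqrt t)) :=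
              mul_le_mul_of_nonneg_left hmills (Real.exp_pos _).le
          _ ≤ Real.exp (2*μ*z) * gaussPDF ((-z - μ * t) / Real.sqrt t) :=
              mul_le_mul_of_nonneg_left (div_le_self hgB.le hnb1) (Real.exp_pos _).le
          _ = gaussPDF ((z - μ * t) / Real.sqrt t) := key
    simpa [Fmu, sub_zero] using h1.sub h2
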